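/- Let N be an odd positive integer and assume the weak Artin hypothesis. Then every γ ∈ Γ_{0,2}(N) can be written as γ = W_N^k · δ₁^{−1} · δ₂ · W_N^ℓ for some integers k, ℓ and some δ₁, δ₂ ∈ G_{0,2}(N). -/

import Mathlib

open Matrix CongruenceSubgroup
open scoped MatrixGroups

/-- The matrix `W_N = [[1,0],[N,1]]` in `SL(2, ℤ)`. -/
def W (N : ℕ) : SL(2, ℤ) := ⟨!![1, 0; (N:ℤ), 1], by norm_num [Matrix.det_fin_two_of]⟩

def Wz (N : ℕ) (m : ℤ) : SL(2, ℤ) :=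
  ⟨!![1, 0; m * (N:ℤ), 1], by norm_num [Matrix.det_fin_two_of]⟩

lemma Wz_mul (N : ℕ) (x y : ℤ) : Wz N x * Wz N y = Wz N (x + y) := by
  apply Matrix.SpecialLinearGroup.ext
  intro i j
  rw [Matrix.SpecialLinearGroup.coe_mul]
  simp only [Wz, Matrix.SpecialLinearGroup.coe_mul, Matrix.mul_fin_two]
  fin_cases i <;> fin_cases j <;> simp <;> ring

lemma W_zpow (N : ℕ) (m : ℤ) : (W N)^m = Wz N m := by
  have h0 : Wz N 0 = 1 := by
    apply Matrix.SpecialLinearGroup.ext; intro i j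
    fin_cases i <;> fin_cases j <;> simp [Wz]
  have h1 : W N = Wz N 1 := by
    apply Matrix.SpecialLinearGroup.ext; intro i j
    fin_cases i <;> fin_cases j <;> simp [Wz, W]
  induction m using Int.induction_on with
  | zero => simpa using h0.symm
  | succ n ih => rw [_root_.zpow_add_one, ih, h1, Wz_mul]
  | pred n ih =>
      rw [_root_.zpow_sub_one, ih, h1, mul_inv_eq_iff_eq_mul, Wz_mul]
      norm_num

lemma exists_pow_two_eq {M s : ℕ} {x : ZMod M} (h : (2:ZMod M)^s * x = 1) :
    ∃ t : ℕ, (2:ZMod M)^t = x := by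
  by_cases hM : M = 0
  · subst hM
    have hu : IsUnit ((2:ZMod 0)^s) := IsUnit.of_mul_eq_one x h
    have h2 : ((2:ℤ))^s = 1 ∨ ((2:ℤ))^s = -1 := Int.isUnit_iff.mp hu
    have hpos : (0:ℤ) < 2^s := by positivity
    have h1 : ((2:ℤ))^s = 1 := by rcases h2 with h2 | h2; exact h2; omega
    have h1' : ((2:ZMod 0))^s = 1 := h1
    rw [h1', one_mul] at h
    exact ⟨0, by rw [pow_zero, h]⟩
  · haveI : NeZero M := ⟨hM⟩
    have hu : IsUnit ((2:ZMod M)^s) := IsUnit.of_mul_eq_one x h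
    have htot : ((2:ZMod M)^s)^(Nat.totient M) = 1 := by
      have := ZMod.pow_totient hu.unit
      calc ((2:ZMod M)^s)^(Nat.totient M) = ((hu.unit : ZMod M))^(Nat.totient M) := by
            rw [IsUnit.unit_spec]
        _ = ((hu.unit ^ (Nat.totient M) : (ZMod M)ˣ) : ZMod M) := by push_cast; ring
        _ = 1 := by rw [this]; rfl
    have hφ : 1 ≤ Nat.totient M := Nat.totient_pos.mpr (Nat.pos_of_ne_zero hM)
    refine ⟨s * (Nat.totient M - 1), ?_⟩
    have key : (2:ZMod M)^(s*(Nat.totient M - 1)) * ((2:ZMod M)^s * x) = x := by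
      rw [← mul_assoc, ← pow_add]
      have hst : s * (Nat.totient M - 1) + s = s * ((Nat.totient M - 1) + 1) := by ring
      have : s * (Nat.totient M - 1) + s = s * Nat.totient M := by
        rw [hst, Nat.sub_add_cancel hφ]
      rw [this, pow_mul, htot, one_mul]
    rw [h, mul_one] at key
    exact key

lemma modEq_to_zmod {A x y : ℤ} (h : x ≡ y [ZMOD A]) :
    (x : ZMod A.natAbs) = (y : ZMod A.natAbs) := by
  have hd : A ∣ y - x := Int.ModEq.dvd h
  have : ((A.natAbs : ℤ)) ∣ y - x := (Int.natAbs_dvd).mpr hd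
  have : x ≡ y [ZMOD (A.natAbs : ℤ)] := Int.modEq_iff_dvd.mpr this
  exact (ZMod.intCast_eq_intCast_iff _ _ _).mpr this

lemma zmod_to_modEq {A x y : ℤ} (h : (x : ZMod A.natAbs) = (y : ZMod A.natAbs)) :
    x ≡ y [ZMOD A] := by
  have : x ≡ y [ZMOD (A.natAbs : ℤ)] := (ZMod.intCast_eq_intCast_iff _ _ _).mp h
  have hd : ((A.natAbs : ℤ)) ∣ y - x := Int.ModEq.dvd this
  exact Int.modEq_iff_dvd.mpr ((Int.natAbs_dvd).mp hd)

/-- `Γ_{0,2}(N)`: matrices in `Γ₀(N)` whose upper-left entry is congruent to a power of `2`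
modulo `N`. -/
def Gamma02 (N : ℕ) : Set SL(2, ℤ) :=
  {γ | γ ∈ Gamma0 N ∧ ∃ j : ℕ, (γ : Matrix (Fin 2) (Fin 2) ℤ) 0 0 ≡ 2^j [ZMOD (N:ℤ)]}

/-- `G_{0,2}(N)`: matrices in `Γ₀(N)` whose upper-left entry is a power of `2`. -/
def G02 (N : ℕ) : Set SL(2, ℤ) :=
  {γ | γ ∈ Gamma0 N ∧ ∃ n : ℕ, (γ : Matrix (Fin 2) (Fin 2) ℤ) 0 0 = 2^n}

/-- The weak form of Artin's conjecture on primitive roots: if `gcd(d, bM) = 1` then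
`b ≡ 2^n (mod d + mM)` for some integer `m` and some nonnegative integer `n`. -/
def WeakArtin : Prop :=
  ∀ b d M : ℤ, Int.gcd d (b * M) = 1 → ∃ (m : ℤ) (n : ℕ), b ≡ 2^n [ZMOD (d + m * M)]

/-- Assuming the weak Artin hypothesis, every `γ ∈ Γ_{0,2}(N)` has the form
`W_N^k δ₁⁻¹ δ₂ W_N^ℓ` with `δ₁, δ₂ ∈ G_{0,2}(N)`. -/
theorem Gamma02_decomposition (N : ℕ) (hN : 0 < N) (hNodd : Odd N) (hArtin : WeakArtin) :
    ∀ γ ∈ Gamma02 N, ∃ (k l : ℤ) (δ₁ δ₂ : SL(2, ℤ)), δ₁ ∈ G02 N ∧ δ₂ ∈ G02 N ∧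
      γ = (W N)^k * δ₁⁻¹ * δ₂ * (W N)^l := by
  intro γ hγ
  obtain ⟨hγ0, j, hj⟩ := hγ
  set a : ℤ := (γ : Matrix (Fin 2) (Fin 2) ℤ) 0 0 with ha
  set b : ℤ := (γ : Matrix (Fin 2) (Fin 2) ℤ) 0 1 with hb
  set c : ℤ := (γ : Matrix (Fin 2) (Fin 2) ℤ) 1 0 with hcdef
  set d : ℤ := (γ : Matrix (Fin 2) (Fin 2) ℤ) 1 1 with hd
  have hγmat : (γ : Matrix (Fin 2) (Fin 2) ℤ) = !![a, b; c, d] := by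
    rw [ha, hb, hcdef, hd]; exact Matrix.eta_fin_two _
  have hdet : a * d - b * c = 1 := by
    have h := γ.2
    rw [Matrix.det_fin_two] at h
    exact h
  -- c = N * c₀
  have hcz : ((c : ℤ) : ZMod N) = 0 := Gamma0_mem.mp hγ0
  obtain ⟨c₀, hc⟩ : (N:ℤ) ∣ c := (ZMod.intCast_zmod_eq_zero_iff_dvd c N).mp hcz
  -- coprimality facts
  have hab : IsCoprime a b := ⟨d, -c, by linear_combination hdet⟩
  have h2N : IsCoprime (2:ℤ) (N:ℤ) := by
    have hodd : ¬ (2:ℤ) ∣ (N:ℤ) := by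
      rw [Int.two_dvd_ne_zero]
      rcases hNodd with ⟨w, hw⟩
      omega
    exact (Int.prime_two.coprime_iff_not_dvd).mpr hodd
  have haN : IsCoprime a (N:ℤ) := by
    obtain ⟨t, ht⟩ : (N:ℤ) ∣ 2^j - a := Int.ModEq.dvd hj
    have : a = 2^j + (N:ℤ) * (-t) := by linear_combination -ht
    rw [this]
    exact (h2N.pow_left).add_mul_left_left (-t)
  -- apply weak Artin
  have hgcd : Int.gcd a ((-b) * (-((N:ℤ)*b))) = 1 := by
    refine Int.isCoprime_iff_gcd_eq_one.mp ?_
    exact (hab.neg_right).mul_right (((haN.mul_right hab)).neg_right)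
  obtain ⟨ℓ, n₂, hArt⟩ := hArtin (-b) a (-((N:ℤ)*b)) hgcd
  set A : ℤ := a + ℓ * -((N:ℤ)*b) with hA
  set A' : ℕ := A.natAbs with hA'
  set x : ℤ := c - ℓ*N*d with hxdef
  have hbx : b*x + 1 = d*A := by rw [hxdef, hA]; linear_combination -hdet
  have hA0 : ((A : ℤ) : ZMod A') = 0 :=
    (ZMod.intCast_zmod_eq_zero_iff_dvd A A').mpr (Int.natAbs_dvd.mpr dvd_rfl)
  have hbxz : (b : ZMod A') * (x : ZMod A') = -1 := by
    have h := congrArg (fun z : ℤ => (z : ZMod A')) hbx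
    push_cast at h
    rw [hA0, mul_zero] at h
    linear_combination h
  have hmb : ((-b : ℤ) : ZMod A') = ((2^n₂ : ℤ) : ZMod A') := modEq_to_zmod hArt
  have h2x : (2:ZMod A')^n₂ * (x : ZMod A') = 1 := by
    push_cast at hmb
    rw [← hmb]
    linear_combination -hbxz
  obtain ⟨n', hx'⟩ := exists_pow_two_eq h2x
  have hxmod : (2:ℤ)^n' ≡ x [ZMOD A] := by
    apply zmod_to_modEq
    push_cast
    rw [hx']
  -- totient mod N
  haveI : NeZero N := ⟨hN.ne'⟩
  have h2unit : IsUnit (2 : ZMod N) := by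
    have : ((2:ℕ) : ZMod N) = (2 : ZMod N) := by norm_num
    rw [← this]
    exact (ZMod.isUnit_iff_coprime 2 N).mpr (Nat.coprime_two_left.mpr hNodd)
  have htotN : (2:ZMod N)^(Nat.totient N) = 1 := by
    have h := ZMod.pow_totient h2unit.unit
    calc (2:ZMod N)^(Nat.totient N) = ((h2unit.unit : ZMod N))^(Nat.totient N) := by
          rw [IsUnit.unit_spec]
      _ = ((h2unit.unit ^ (Nat.totient N) : (ZMod N)ˣ) : ZMod N) := by push_cast; ring
      _ = 1 := by rw [h]; rfl
  have hφ : 1 ≤ Nat.totient N := Nat.totient_pos.mpr hN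
  set n₁ : ℕ := n' + j*(Nat.totient N - 1) with hn₁
  have hn1j : n₁ + j = n' + j * Nat.totient N := by
    have h2 : (Nat.totient N - 1) + 1 = Nat.totient N := Nat.sub_add_cancel hφ
    calc n₁ + j = n' + j * ((Nat.totient N - 1) + 1) := by rw [hn₁]; ring
      _ = n' + j * Nat.totient N := by rw [h2]
  -- A ≡ a ≡ 2^j mod N
  have hAzN : ((A : ℤ) : ZMod N) = ((2^j : ℤ) : ZMod N) := by
    have hja : ((a : ℤ) : ZMod N) = ((2^j : ℤ) : ZMod N) :=
      (ZMod.intCast_eq_intCast_iff _ _ _).mpr hj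
    rw [hA]
    push_cast
    push_cast at hja
    rw [ZMod.natCast_self]
    rw [← hja]; ring
  have hNdvd : (N:ℤ) ∣ 2^n' - 2^n₁ * A := by
    rw [← ZMod.intCast_zmod_eq_zero_iff_dvd]
    push_cast
    push_cast at hAzN
    rw [hAzN]
    have hp : (2:ZMod N)^n₁ * (2:ZMod N)^j = (2:ZMod N)^n' := by
      rw [← pow_add, hn1j, pow_add, pow_mul', htotN, one_pow, mul_one]
    push_cast
    linear_combination -hp
  obtain ⟨C₁, hC₁⟩ := hNdvd
  -- divisibility giving k
  have hAN : IsCoprime A (N:ℤ) := by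
    have h' : IsCoprime (a + (N:ℤ) * (-(ℓ*b))) (N:ℤ) := haN.add_mul_left_left (-(ℓ*b))
    have : A = a + (N:ℤ) * (-(ℓ*b)) := by rw [hA]; ring
    rwa [this]
  have hkdvd : A ∣ (c₀ - ℓ*d - C₁) := by
    have h1 : A ∣ (N:ℤ) * (c₀ - ℓ*d - C₁) := by
      have heq : (N:ℤ) * (c₀ - ℓ*d - C₁) = (x - 2^n') + 2^n₁ * A := by
        rw [hxdef]
        linear_combination hC₁ - hc
      rw [heq]
      exact dvd_add (Int.ModEq.dvd hxmod) (Dvd.intro_left _ rfl)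
    exact hAN.dvd_of_dvd_mul_left h1
  obtain ⟨k, hk⟩ := hkdvd
  -- Bezout for δ₁
  obtain ⟨u, v, huv⟩ : IsCoprime ((2:ℤ)^n₁) (N:ℤ) := h2N.pow_left
  have hdet₁ : (!![2^n₁, 1; (N:ℤ)*(-v), u] : Matrix (Fin 2) (Fin 2) ℤ).det = 1 := by
    rw [Matrix.det_fin_two_of]; linear_combination huv
  set δ₁ : SL(2,ℤ) := ⟨!![2^n₁, 1; (N:ℤ)*(-v), u], hdet₁⟩ with hδ₁def
  set δ₂ : SL(2,ℤ) := δ₁ * (W N)^(-k) * γ * (W N)^(-ℓ) with hδ₂def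
  have hδ₁coe : (δ₁ : Matrix (Fin 2) (Fin 2) ℤ) = !![2^n₁, 1; (N:ℤ)*(-v), u] := rfl
  have hmat : (δ₂ : Matrix (Fin 2) (Fin 2) ℤ) =
      !![2^n₁*a - k*N*a + c - ℓ*N*(2^n₁*b - k*N*b + d), 2^n₁*b - k*N*b + d;
         N*(-v)*a - u*k*N*a + u*c - ℓ*N*(N*(-v)*b - u*k*N*b + u*d),
           N*(-v)*b - u*k*N*b + u*d] := by
    rw [hδ₂def, W_zpow, W_zpow]
    simp only [Matrix.SpecialLinearGroup.coe_mul]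
    rw [hγmat]
    simp only [hδ₁def, Wz, Matrix.SpecialLinearGroup.coe_mk]
    simp only [Matrix.mul_fin_two]
    congr 1 <;> ring_nf
  have h00 : (δ₂ : Matrix (Fin 2) (Fin 2) ℤ) 0 0 = 2^n' := by
    rw [hmat]
    show 2^n₁*a - k*N*a + c - ℓ*N*(2^n₁*b - k*N*b + d) = 2^n'
    linear_combination (k*(N:ℤ) - 2^n₁) * hA + hc + (N:ℤ)*hk - hC₁ + ((N:ℤ)*k - 0) * hA
  have h10 : (δ₂ : Matrix (Fin 2) (Fin 2) ℤ) 1 0 =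
      (N:ℤ) * ((-v - u*k)*a + u*c₀ - ℓ*((N:ℤ)*(-v-u*k)*b + u*d)) := by
    rw [hmat]
    show (N:ℤ)*(-v)*a - u*k*N*a + u*c - ℓ*N*((N:ℤ)*(-v)*b - u*k*N*b + u*d) = _
    linear_combination u * hc
  have hδ₁mem : δ₁ ∈ G02 N := by
    refine ⟨Gamma0_mem.mpr ?_, n₁, by rw [hδ₁coe]; simp⟩
    rw [hδ₁coe]
    show (((N:ℤ)*(-v) : ℤ) : ZMod N) = 0
    push_cast
    rw [ZMod.natCast_self]
    ring
  have hδ₂mem : δ₂ ∈ G02 N := by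
    refine ⟨Gamma0_mem.mpr ?_, n', h00⟩
    rw [h10]
    push_cast
    rw [ZMod.natCast_self]
    ring
  exact ⟨k, ℓ, δ₁, δ₂, hδ₁mem, hδ₂mem, by rw [hδ₂def]; group⟩
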